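/- Let B be a monotone bead distribution of n beads on [μ,∞) with gaps b₁ = B₁ − μ, bₖ = Bₖ − B_{k−1}, satisfying bₖ > b_{k−2} for all 3 ≤ k ≤ n (with also b₁ ≤ b₂ ≤ ⋯ ≤ bₙ). Then for every monotone bead distribution A with Aₖ ≤ Bₖ for all k, B can be obtained from A by a finite sequence of admissible bead slides. -/

import Mathlib

/-- `A` is a monotone bead distribution of `n` beads on `[μ,∞)`.
We use the convention `A 0 = μ`, so the beads are `A 1 < ⋯ < A n` with
`μ ≤ A 1` and nondecreasing successive gaps. -/
def BeadMono (n : ℕ) (μ : ℝ) (A : ℕ → ℝ) : Prop :=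
  A 0 = μ ∧ A 0 ≤ A 1 ∧
  (∀ k, 2 ≤ k → k ≤ n → A (k - 1) < A k) ∧
  (∀ k, 2 ≤ k → k ≤ n → A (k - 1) - A (k - 2) ≤ A k - A (k - 1))

/-- One admissible bead slide: move the `k`-th bead to the right by `δ ≥ 0`
so that the result is again monotone. -/
def BeadSlide (n : ℕ) (μ : ℝ) (A B : ℕ → ℝ) : Prop :=
  ∃ k δ, 1 ≤ k ∧ k ≤ n ∧ 0 ≤ δ ∧
    B = Function.update A k (A k + δ) ∧ BeadMono n μ B

/-- `BeadReach n μ A B`: `B` is obtained from `A` by finitely many admissible slides. -/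
def BeadReach (n : ℕ) (μ : ℝ) : (ℕ → ℝ) → (ℕ → ℝ) → Prop :=
  Relation.ReflTransGen (BeadSlide n μ)

namespace BeadProof

/-- coordinates never decrease along a reach -/
lemma reach_le {n : ℕ} {μ : ℝ} {A C : ℕ → ℝ} (h : BeadReach n μ A C) :
    ∀ j, A j ≤ C j := by
  induction h with
  | refl => intro j; exact le_refl _
  | tail _ hs ih =>
    obtain ⟨k, δ, _, _, hδ, rfl, _⟩ := hs
    intro j
    rcases eq_or_ne j k with rfl | hne
    · rw [Function.update_self]; linarith [ih j]
    · rw [Function.update_of_ne hne]; exact ih j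

/-- a monotone config is nondecreasing up to n -/
lemma mono_le {n : ℕ} {μ : ℝ} {A : ℕ → ℝ} (hA : BeadMono n μ A) :
    ∀ k, k ≤ n → ∀ j, j ≤ k → A j ≤ A k := by
  intro k
  induction k with
  | zero =>
    intro _ j hj
    have : j = 0 := by omega
    subst this; exact le_refl _
  | succ k ih =>
    intro hk j hj
    rcases Nat.lt_succ_iff_lt_or_eq.mp (Nat.lt_succ_of_le hj) with h | h
    · have h1 : A j ≤ A k := ih (by omega) j (by omega)
      have h2 : A k ≤ A (k+1) := by
        rcases Nat.eq_zero_or_pos k with rfl | hkpos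
        · exact hA.2.1
        · have := hA.2.2.1 (k+1) (by omega) hk
          simp only [Nat.add_sub_cancel] at this
          exact le_of_lt this
      linarith
    · -- j = k+1 case: j < k+1 ∨ j = k+1
      subst h; exact le_refl _

/-- One Gauss–Seidel top-down sweep: new position of bead `k`, computed
downward from bead `n` (which goes all the way to `B n`). -/
noncomputable def sw (B O : ℕ → ℝ) (n k : ℕ) : ℝ :=
  if _h : n ≤ k then B n
  else min (B k) ((sw B O n (k+1) + O (k-1)) / 2)
termination_by n - k
decreasing_by omega

lemma sw_top (B O : ℕ → ℝ) {n k : ℕ} (h : n ≤ k) : sw B O n k = B n := by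
  rw [sw]; simp [h]

lemma sw_min (B O : ℕ → ℝ) {n k : ℕ} (h : k < n) :
    sw B O n k = min (B k) ((sw B O n (k+1) + O (k-1)) / 2) := by
  rw [sw]; simp [Nat.not_le.mpr h]

section Sweep

variable {n : ℕ} {μ : ℝ} {B O : ℕ → ℝ}
variable (hB : BeadMono n μ B) (hO : BeadMono n μ O)
variable (hOB : ∀ k, 1 ≤ k → k ≤ n → O k ≤ B k)

include hO hOB in
lemma O_le_sw : ∀ k, 1 ≤ k → k ≤ n → O k ≤ sw B O n k := by
  have key : ∀ j k, n - k = j → 1 ≤ k → k ≤ n → O k ≤ sw B O n k := by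
    intro j
    induction j with
    | zero =>
      intro k hj h1 h2
      have hkn : k = n := by omega
      rw [hkn, sw_top B O (le_refl n)]
      exact hOB n (by omega) (by omega)
    | succ j ih =>
      intro k hj h1 h2
      have hk : k < n := by omega
      rw [sw_min B O hk]
      refine le_min (hOB k h1 h2) ?_
      have ih1 : O (k+1) ≤ sw B O n (k+1) := ih (k+1) (by omega) (by omega) (by omega)
      have hg := hO.2.2.1
      have hgap := hO.2.2.2 (k+1) (by omega) (by omega)
      simp only [Nat.add_sub_cancel] at hgap
      have e : k + 1 - 2 = k - 1 := by omega
      rw [e] at hgap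
      linarith
  exact fun k => key (n - k) k rfl

include hOB in
lemma sw_le_B : ∀ k, 1 ≤ k → k ≤ n → sw B O n k ≤ B k := by
  intro k h1 h2
  rcases lt_or_eq_of_le h2 with h | h
  · rw [sw_min B O h]; exact min_le_left _ _
  · subst h
    exact le_of_eq (sw_top B O le_rfl)

include hO hOB in
lemma sw_strict : ∀ k, 2 ≤ k → k ≤ n → sw B O n (k-1) < sw B O n k := by
  intro k h2 hn
  have hlt : k - 1 < n := by omega
  have hmin := sw_min B O hlt
  have e1 : k - 1 + 1 = k := by omega
  have e2 : k - 1 - 1 = k - 2 := by omega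
  rw [e1, e2] at hmin
  have h1 : sw B O n (k-1) ≤ (sw B O n k + O (k-2)) / 2 :=
    hmin ▸ min_le_right _ _
  have hO2 : O (k-2) < O k := by
    rcases Nat.eq_or_lt_of_le h2 with h | h
    · have ha : O 1 < O 2 := by
        have := hO.2.2.1 2 (le_refl 2) (by omega)
        norm_num at this
        exact this
      have h0 : O 0 ≤ O 1 := hO.2.1
      have e : k - 2 = 0 := by omega
      rw [e, ← h]
      linarith
    · have ha : O (k-2) < O (k-1) := by
        have := hO.2.2.1 (k-1) (by omega) (by omega)
        have e3 : k - 1 - 1 = k - 2 := by omega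
        rw [e3] at this; exact this
      have hb : O (k-1) < O k := hO.2.2.1 k h2 hn
      linarith
  have h3 : O k ≤ sw B O n k := O_le_sw hO hOB k (by omega) hn
  linarith

end Sweep

/-- Hybrid configuration during a sweep: beads `m..n` have moved to their
new (sweep) positions, beads below `m` are still at their old positions. -/
noncomputable def Hyb (B O : ℕ → ℝ) (n m k : ℕ) : ℝ :=
  if m ≤ k ∧ k ≤ n then sw B O n k else O k

section Sweep2

variable {n : ℕ} {μ : ℝ} {B O : ℕ → ℝ}
variable (hB : BeadMono n μ B) (hO : BeadMono n μ O)
variable (hOB : ∀ k, 1 ≤ k → k ≤ n → O k ≤ B k)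

include hO hOB in
lemma hyb_mono : ∀ m, 1 ≤ m → BeadMono n μ (Hyb B O n m) := by
  intro m hm
  refine ⟨?_, ?_, ?_, ?_⟩
  · show Hyb B O n m 0 = μ
    unfold Hyb
    rw [if_neg (by omega)]
    exact hO.1
  · show Hyb B O n m 0 ≤ Hyb B O n m 1
    unfold Hyb
    rw [if_neg (by omega)]
    rw [hO.1]
    by_cases hc : m ≤ 1 ∧ 1 ≤ n
    · rw [if_pos hc]
      have h1 : O 1 ≤ sw B O n 1 := O_le_sw hO hOB 1 le_rfl hc.2
      have h2 : μ ≤ O 1 := hO.1 ▸ hO.2.1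
      linarith
    · rw [if_neg hc]
      exact hO.1 ▸ hO.2.1
  · intro k h2 hkn
    show Hyb B O n m (k-1) < Hyb B O n m k
    unfold Hyb
    by_cases c1 : m ≤ k - 1
    · rw [if_pos ⟨c1, by omega⟩, if_pos ⟨by omega, hkn⟩]
      exact sw_strict hO hOB k h2 hkn
    · rw [if_neg (by omega)]
      by_cases c2 : m ≤ k
      · rw [if_pos ⟨c2, hkn⟩]
        have ha : O (k-1) < O k := hO.2.2.1 k h2 hkn
        have hb : O k ≤ sw B O n k := O_le_sw hO hOB k (by omega) hkn
        linarith
      · rw [if_neg (by omega)]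
        exact hO.2.2.1 k h2 hkn
  · intro k h2 hkn
    show Hyb B O n m (k-1) - Hyb B O n m (k-2) ≤ Hyb B O n m k - Hyb B O n m (k-1)
    unfold Hyb
    by_cases c1 : m ≤ k - 2
    · -- all three in the new zone
      rw [if_pos ⟨by omega, by omega⟩, if_pos ⟨c1, by omega⟩, if_pos ⟨by omega, hkn⟩]
      have hmin := sw_min B O (show k - 1 < n by omega)
      have e1 : k - 1 + 1 = k := by omega
      have e2 : k - 1 - 1 = k - 2 := by omega
      rw [e1, e2] at hmin
      have h1 : sw B O n (k-1) ≤ (sw B O n k + O (k-2)) / 2 := hmin ▸ min_le_right _ _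
      have h3 : O (k-2) ≤ sw B O n (k-2) := O_le_sw hO hOB (k-2) (by omega) (by omega)
      linarith
    · by_cases c2 : m ≤ k - 1
      · -- k-1 = m : gap with old bead below
        rw [if_pos ⟨c2, by omega⟩, if_neg (by omega), if_pos ⟨by omega, hkn⟩]
        have hmin := sw_min B O (show k - 1 < n by omega)
        have e1 : k - 1 + 1 = k := by omega
        have e2 : k - 1 - 1 = k - 2 := by omega
        rw [e1, e2] at hmin
        have h1 : sw B O n (k-1) ≤ (sw B O n k + O (k-2)) / 2 := hmin ▸ min_le_right _ _
        linarith
      · rw [if_neg (by omega), if_neg (by omega)]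
        by_cases c3 : m ≤ k
        · rw [if_pos ⟨c3, hkn⟩]
          have hg := hO.2.2.2 k h2 hkn
          have hk : O k ≤ sw B O n k := O_le_sw hO hOB k (by omega) hkn
          linarith
        · rw [if_neg (by omega)]
          exact hO.2.2.2 k h2 hkn

include hO hOB in
lemma hyb_slide : ∀ m, 1 ≤ m → m ≤ n →
    BeadSlide n μ (Hyb B O n (m+1)) (Hyb B O n m) := by
  intro m h1 h2
  refine ⟨m, sw B O n m - O m, h1, h2, ?_, ?_, hyb_mono hO hOB m h1⟩
  · have := O_le_sw hO hOB m h1 h2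
    linarith
  · funext k
    rcases eq_or_ne k m with rfl | hne
    · rw [Function.update_self]
      unfold Hyb
      rw [if_pos ⟨le_rfl, h2⟩, if_neg (by omega)]
      ring
    · rw [Function.update_of_ne hne]
      unfold Hyb
      by_cases hc : m ≤ k ∧ k ≤ n
      · rw [if_pos hc, if_pos ⟨by omega, hc.2⟩]
      · rw [if_neg hc]
        rw [if_neg (by omega)]

include hO hOB in
lemma reach_sweep : BeadReach n μ O (Hyb B O n 1) := by
  have key : ∀ j, j ≤ n → BeadReach n μ O (Hyb B O n (n+1-j)) := by
    intro j
    induction j with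
    | zero =>
      intro _
      have heq : Hyb B O n (n+1) = O := by
        funext k; unfold Hyb; rw [if_neg (by omega)]
      simp only [Nat.sub_zero]
      rw [heq]
      exact Relation.ReflTransGen.refl
    | succ j ih =>
      intro hj
      have h1 : BeadReach n μ O (Hyb B O n (n+1-j)) := ih (by omega)
      have e : n + 1 - j = (n - j) + 1 := by omega
      rw [e] at h1
      exact Relation.ReflTransGen.tail h1
        (by
          have e2 : n + 1 - (j+1) = n - j := by omega
          rw [e2]
          exact hyb_slide hO hOB (n-j) (by omega) (by omega))
  have := key n (le_refl n)
  have e : n + 1 - n = 1 := by omega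
  rwa [e] at this

end Sweep2

section Decay

variable {n : ℕ} {μ : ℝ} {B O : ℕ → ℝ}
variable (hB : BeadMono n μ B) (hO : BeadMono n μ O)
variable (hOB : ∀ k, 1 ≤ k → k ≤ n → O k ≤ B k)

include hB hO hOB in
lemma sw_decay {M : ℝ} (hM0 : 0 ≤ M) (hM : ∀ k, 1 ≤ k → k ≤ n → B k - O k ≤ M) :
    ∀ j k, n - k = j → 1 ≤ k → k ≤ n →
      (2:ℝ)^j * (B k - sw B O n k) ≤ ((2:ℝ)^j - 1) * M := by
  intro j
  induction j with
  | zero =>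
    intro k hj h1 h2
    have hkn : k = n := by omega
    rw [hkn, sw_top B O le_rfl]
    simp
  | succ j ih =>
    intro k hj h1 h2
    have hk : k < n := by omega
    have hpw : (0:ℝ) < 2^j := by positivity
    have hps : ((2:ℝ)^(j+1)) = 2^j * 2 := pow_succ 2 j
    rw [sw_min B O hk]
    rcases min_cases (B k) ((sw B O n (k+1) + O (k-1)) / 2) with ⟨hmin, _⟩ | ⟨hmin, _⟩
    · rw [hmin]
      have : (0:ℝ) ≤ ((2:ℝ)^(j+1) - 1) * M := by
        have : (1:ℝ) ≤ 2^(j+1) := one_le_pow₀ (by norm_num)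
        nlinarith
      simpa using this
    · rw [hmin]
      have ihh : (2:ℝ)^j * (B (k+1) - sw B O n (k+1)) ≤ ((2:ℝ)^j - 1) * M :=
        ih (k+1) (by omega) (by omega) (by omega)
      have hd : B (k-1) - O (k-1) ≤ M := by
        rcases Nat.eq_zero_or_pos (k-1) with h0 | hpos
        · rw [h0, hB.1, hO.1]; simpa using hM0
        · exact hM (k-1) hpos (by omega)
      have hσ : 0 ≤ B (k+1) + B (k-1) - 2 * B k := by
        have := hB.2.2.2 (k+1) (by omega) (by omega)
        simp only [Nat.add_sub_cancel] at this
        have e : k + 1 - 2 = k - 1 := by omega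
        rw [e] at this
        linarith
      have h2d : (2:ℝ)^j * (B (k-1) - O (k-1)) ≤ 2^j * M :=
        mul_le_mul_of_nonneg_left hd (le_of_lt hpw)
      have h2σ : 0 ≤ (2:ℝ)^j * (B (k+1) + B (k-1) - 2 * B k) :=
        mul_nonneg (le_of_lt hpw) hσ
      rw [hps]
      nlinarith [ihh, h2d, h2σ]

include hB hO hOB in
lemma sw_decay' {M : ℝ} (hM0 : 0 ≤ M) (hM : ∀ k, 1 ≤ k → k ≤ n → B k - O k ≤ M) :
    ∀ k, 1 ≤ k → k ≤ n → B k - sw B O n k ≤ (1 - (1/2:ℝ)^n) * M := by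
  intro k h1 h2
  set j := n - k with hj
  have key := sw_decay hB hO hOB hM0 hM j k rfl h1 h2
  have hpw : (0:ℝ) < 2^j := by positivity
  have hhalf : ((1/2:ℝ))^j * 2^j = 1 := by
    rw [← mul_pow]; norm_num
  have step1 : B k - sw B O n k ≤ (1 - (1/2:ℝ)^j) * M := by
    have := mul_le_mul_of_nonneg_left key (show (0:ℝ) ≤ (1/2)^j by positivity)
    calc B k - sw B O n k = (1/2:ℝ)^j * 2^j * (B k - sw B O n k) := by rw [hhalf]; ring
    _ = (1/2:ℝ)^j * (2^j * (B k - sw B O n k)) := by ring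
    _ ≤ (1/2:ℝ)^j * (((2:ℝ)^j - 1) * M) := this
    _ = (1 - (1/2:ℝ)^j) * M := by
        have : (1/2:ℝ)^j * (2:ℝ)^j = 1 := hhalf
        nlinarith [this]
  have hmono : ((1/2:ℝ))^n ≤ (1/2:ℝ)^j :=
    pow_le_pow_of_le_one (by norm_num) (by norm_num) (by omega)
  nlinarith [step1, hmono, hM0]

end Decay

/-- Threshold below which the final sweep lands bead 1 exactly on `B 1`. -/
noncomputable def epsB (μ : ℝ) (B : ℕ → ℝ) (n : ℕ) : ℝ :=
  if 0 < B 2 + μ - 2 * B 1 then B 2 + μ - 2 * B 1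
  else if n ≤ 2 then 1
  else (B 3 + B 1 - 2 * B 2) / 2

section Arrival

variable {n : ℕ} {μ : ℝ} {B O : ℕ → ℝ}
variable (hB : BeadMono n μ B)
variable (hgap : ∀ k, 3 ≤ k → k ≤ n → B (k - 2) - B (k - 3) < B k - B (k - 1))
variable (hO : BeadMono n μ O)
variable (hOB : ∀ k, 1 ≤ k → k ≤ n → O k ≤ B k)

include hB hgap in
lemma epsB_pos (hn : 1 ≤ n) : 0 < epsB μ B n := by
  unfold epsB
  split_ifs with h1 h2
  · exact h1
  · norm_num
  · push_neg at h1 h2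
    have hg := hgap 3 le_rfl (by omega)
    norm_num at hg
    have hB0 : B 0 = μ := hB.1
    rw [hB0] at hg
    linarith

include hB hO hOB in
lemma arrival (hn : 1 ≤ n)
    (hgap : ∀ k, 3 ≤ k → k ≤ n → B (k - 2) - B (k - 3) < B k - B (k - 1))
    (hM : ∀ k, 1 ≤ k → k ≤ n → B k - O k < epsB μ B n) :
    sw B O n 1 = B 1 := by
  rcases Nat.eq_or_lt_of_le hn with h1 | h1
  · rw [sw_top B O (by omega), ← h1]
  · -- n ≥ 2
    rw [sw_min B O h1]
    have hO0 : O 0 = μ := hO.1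
    have e0 : (1:ℕ) - 1 = 0 := rfl
    rw [e0, hO0]
    have hmain : 2 * B 1 ≤ sw B O n 2 + μ := by
      by_cases hs : 0 < B 2 + μ - 2 * B 1
      · have heps : epsB μ B n = B 2 + μ - 2 * B 1 := by unfold epsB; rw [if_pos hs]
        have h2 : B 2 - O 2 < epsB μ B n := hM 2 (by omega) h1
        have hOsw : O 2 ≤ sw B O n 2 := O_le_sw hO hOB 2 (by omega) h1
        rw [heps] at h2
        linarith
      · have hσ0 : B 1 - μ ≤ B 2 - B 1 := by
          have := hB.2.2.2 2 le_rfl h1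
          norm_num at this
          rw [hB.1] at this
          linarith
        have hsw2 : sw B O n 2 = B 2 := by
          rcases eq_or_lt_of_le (show 2 ≤ n by omega) with h2n | h2n
          · rw [← h2n, sw_top B O le_rfl]
          · rw [sw_min B O h2n]
            have heps : epsB μ B n = (B 3 + B 1 - 2 * B 2) / 2 := by
              unfold epsB; rw [if_neg hs, if_neg (by omega)]
            have h3 : B 3 - O 3 < epsB μ B n := hM 3 (by omega) h2n
            have hO3 : O 3 ≤ sw B O n 3 := O_le_sw hO hOB 3 (by omega) h2n
            have h1' : B 1 - O 1 < epsB μ B n := hM 1 (by omega) (by omega)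
            have e1 : (2:ℕ) + 1 = 3 := rfl
            have e2 : (2:ℕ) - 1 = 1 := rfl
            rw [e1, e2]
            rw [heps] at h3 h1'
            exact min_eq_left (by linarith)
        linarith
    exact min_eq_left (by linarith)

end Arrival

/-- Iterated sweeps starting from `A`. -/
noncomputable def itc (B A : ℕ → ℝ) (n : ℕ) : ℕ → ℕ → ℝ
  | 0 => A
  | p+1 => Hyb B (itc B A n p) n 1

section Iter

variable {n : ℕ} {μ : ℝ} {B A : ℕ → ℝ}
variable (hB : BeadMono n μ B) (hA : BeadMono n μ A)
variable (hAB : ∀ k, 1 ≤ k → k ≤ n → A k ≤ B k)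

include hB hA hAB in
lemma iter_props : ∀ p,
    BeadMono n μ (itc B A n p) ∧ (∀ k, 1 ≤ k → k ≤ n → itc B A n p k ≤ B k) ∧
    BeadReach n μ A (itc B A n p) ∧
    (∀ k, 1 ≤ k → k ≤ n →
      B k - itc B A n p k ≤ (1 - (1/2:ℝ)^n)^p * (B n - μ)) := by
  have hM₀ : 0 ≤ B n - μ := by
    have := mono_le hB n le_rfl 0 (Nat.zero_le n)
    rw [hB.1] at this; linarith
  have hθ0 : (0:ℝ) ≤ 1 - (1/2:ℝ)^n := by
    have : ((1/2:ℝ))^n ≤ 1 := pow_le_one₀ (by norm_num) (by norm_num)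
    linarith
  intro p
  induction p with
  | zero =>
    refine ⟨hA, hAB, Relation.ReflTransGen.refl, ?_⟩
    intro k h1 h2
    have hb : B k ≤ B n := mono_le hB n le_rfl k h2
    have ha : μ ≤ A k := by
      have := mono_le hA k h2 0 (Nat.zero_le k)
      rw [hA.1] at this; linarith
    have hfin : B k - A k ≤ B n - μ := by linarith
    simpa [itc] using hfin
  | succ p ih =>
    obtain ⟨hO, hOB, hre, hdef⟩ := ih
    have hmono : BeadMono n μ (itc B A n (p+1)) := hyb_mono hO hOB 1 le_rfl
    have hdefM : 0 ≤ (1 - (1/2:ℝ)^n)^p * (B n - μ) :=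
      mul_nonneg (pow_nonneg hθ0 p) hM₀
    refine ⟨hmono, ?_, ?_, ?_⟩
    · intro k h1 h2
      show Hyb B (itc B A n p) n 1 k ≤ B k
      unfold Hyb
      rw [if_pos ⟨h1, h2⟩]
      exact sw_le_B hOB k h1 h2
    · exact Relation.ReflTransGen.trans hre (reach_sweep hO hOB)
    · intro k h1 h2
      have key := sw_decay' hB hO hOB hdefM hdef k h1 h2
      have hh : Hyb B (itc B A n p) n 1 k = sw B (itc B A n p) n k := by
        unfold Hyb; rw [if_pos ⟨h1, h2⟩]
      show B k - Hyb B (itc B A n p) n 1 k ≤ _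
      rw [hh, pow_succ]
      calc B k - sw B (itc B A n p) n k
          ≤ (1 - (1/2:ℝ)^n) * ((1 - (1/2:ℝ)^n)^p * (B n - μ)) := key
        _ = (1 - (1/2:ℝ)^n)^p * (1 - (1/2:ℝ)^n) * (B n - μ) := by ring

include hB hA hAB in
lemma lemA (hn : 1 ≤ n)
    (hgap : ∀ k, 3 ≤ k → k ≤ n → B (k - 2) - B (k - 3) < B k - B (k - 1)) :
    ∃ D, BeadReach n μ A D ∧ BeadMono n μ D ∧
      (∀ k, 1 ≤ k → k ≤ n → D k ≤ B k) ∧ D 1 = B 1 := by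
  have hM₀ : 0 ≤ B n - μ := by
    have := mono_le hB n le_rfl 0 (Nat.zero_le n)
    rw [hB.1] at this; linarith
  have hθ0 : (0:ℝ) ≤ 1 - (1/2:ℝ)^n := by
    have : ((1/2:ℝ))^n ≤ 1 := pow_le_one₀ (by norm_num) (by norm_num)
    linarith
  have hθ1 : (1 - (1/2:ℝ)^n) < 1 := by
    have : (0:ℝ) < (1/2:ℝ)^n := by positivity
    linarith
  have heps : 0 < epsB μ B n := epsB_pos hB hgap hn
  obtain ⟨p, hp⟩ : ∃ p, (1 - (1/2:ℝ)^n)^p * (B n - μ) < epsB μ B n := by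
    rcases eq_or_lt_of_le hM₀ with h0 | h0
    · exact ⟨0, by rw [← h0]; simpa using heps⟩
    · obtain ⟨p, hp⟩ := exists_pow_lt_of_lt_one (div_pos heps h0) hθ1
      exact ⟨p, (lt_div_iff₀ h0).mp hp⟩
  obtain ⟨hOp, hOBp, hrep, hdefp⟩ := iter_props hB hA hAB p
  obtain ⟨hOq, hOBq, hreq, _⟩ := iter_props hB hA hAB (p+1)
  refine ⟨itc B A n (p+1), hreq, hOq, hOBq, ?_⟩
  have hsmall : ∀ k, 1 ≤ k → k ≤ n → B k - itc B A n p k < epsB μ B n :=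
    fun k h1 h2 => lt_of_le_of_lt (hdefp k h1 h2) hp
  have harr := arrival hB hOp hOBp hn hgap hsmall
  show Hyb B (itc B A n p) n 1 1 = B 1
  unfold Hyb
  rw [if_pos ⟨le_rfl, hn⟩]
  exact harr

end Iter

section Shift

variable {n : ℕ} {μ : ℝ} {B D : ℕ → ℝ}

lemma unshift_reach (hB : BeadMono (n+1) μ B) (hD : BeadMono (n+1) μ D)
    (hD1 : D 1 = B 1) :
    ∀ E, BeadReach n (B 1) (fun k => D (k+1)) E →
      BeadReach (n+1) μ D (fun k => if k = 0 then μ else E (k-1)) := by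
  intro E hre
  induction hre with
  | refl =>
    have heq : (fun k => if k = 0 then μ else D (k-1+1)) = D := by
      funext k
      rcases Nat.eq_zero_or_pos k with rfl | hk
      · rw [if_pos rfl, hD.1]
      · rw [if_neg (by omega)]
        congr 1
        omega
    show BeadReach (n+1) μ D (fun k => if k = 0 then μ else D (k-1+1))
    rw [heq]
    exact Relation.ReflTransGen.refl
  | @tail F G h1 h2 ih =>
    obtain ⟨k, δ, hk1, hkn, hδ, hGdef, hGmono⟩ := h2
    apply Relation.ReflTransGen.tail ih
    have hG0 : G 0 = B 1 := hGmono.1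
    have hFge : ∀ j, D (j+1) ≤ F j := reach_le h1
    have hGF : ∀ j, F j ≤ G j := by
      intro j
      rw [hGdef]
      rcases eq_or_ne j k with rfl | hne
      · rw [Function.update_self]; linarith
      · rw [Function.update_of_ne hne]
    refine ⟨k+1, δ, by omega, by omega, hδ, ?_, ?_⟩
    · funext j
      simp only [Function.update_apply, hGdef]
      by_cases h0 : j = 0
      · subst h0
        simp [show (0:ℕ) ≠ k + 1 by omega]
      · by_cases hk' : j = k + 1
        · subst hk'
          simp
        · simp [h0, hk', show j - 1 ≠ k by omega]
    · -- BeadMono (n+1) μ (unshift G)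
      refine ⟨?_, ?_, ?_, ?_⟩
      · show (if (0:ℕ) = 0 then μ else G (0-1)) = μ
        rw [if_pos rfl]
      · show (if (0:ℕ) = 0 then μ else G (0-1)) ≤ (if (1:ℕ) = 0 then μ else G (1-1))
        rw [if_pos rfl, if_neg one_ne_zero]
        rw [hG0, ← hB.1]
        exact hB.2.1
      · intro j hj2 hjn
        obtain ⟨m, rfl⟩ : ∃ m, j = m + 2 := ⟨j - 2, by omega⟩
        show (if m + 1 = 0 then μ else G (m+1-1)) < (if m + 2 = 0 then μ else G (m+2-1))
        rw [if_neg (Nat.succ_ne_zero m), if_neg (Nat.succ_ne_zero (m+1))]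
        rcases Nat.eq_zero_or_pos m with rfl | hm
        · -- G 0 = B 1 = D 1 < D 2 ≤ F 1 ≤ G 1
          have hd : D 1 < D 2 := by
            have := hD.2.2.1 2 le_rfl (by omega)
            norm_num at this; exact this
          have := hFge 1
          have := hGF 1
          show G 0 < G 1
          rw [hG0, ← hD1]
          linarith
        · have := hGmono.2.2.1 (m+1) (by omega) (by omega)
          simpa using this
      · intro j hj2 hjn
        obtain ⟨m, rfl⟩ : ∃ m, j = m + 2 := ⟨j - 2, by omega⟩
        show (if m + 1 = 0 then μ else G (m+1-1)) - (if m = 0 then μ else G (m-1)) ≤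
          (if m + 2 = 0 then μ else G (m+2-1)) - (if m + 1 = 0 then μ else G (m+1-1))
        rw [if_neg (Nat.succ_ne_zero m), if_neg (Nat.succ_ne_zero (m+1))]
        rcases Nat.eq_zero_or_pos m with rfl | hm
        · rw [if_pos rfl]
          have hd : D 1 - D 0 ≤ D 2 - D 1 := by
            have := hD.2.2.2 2 le_rfl (by omega)
            norm_num at this; linarith
          have h1' := hFge 1
          have h2' := hGF 1
          have hD0 : D 0 = μ := hD.1
          show G (0+1-1) - μ ≤ G (0+2-1) - G (0+1-1)
          simp only [Nat.add_sub_cancel]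
          show G 0 - μ ≤ G 1 - G 0
          rw [hG0, ← hD1]
          linarith
        · rw [if_neg (by omega)]
          have := hGmono.2.2.2 (m+1) (by omega) (by omega)
          have e1 : m + 1 - 1 = m := by omega
          have e2 : m + 1 - 2 = m - 1 := by omega
          rw [e1, e2] at this
          simpa using this

end Shift

lemma mainAux : ∀ n : ℕ, ∀ μ : ℝ, ∀ B : ℕ → ℝ, BeadMono n μ B →
    (∀ k, 3 ≤ k → k ≤ n → B (k - 2) - B (k - 3) < B k - B (k - 1)) →
    ∀ A : ℕ → ℝ, BeadMono n μ A → (∀ k, 1 ≤ k → k ≤ n → A k ≤ B k) →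
      ∃ C : ℕ → ℝ, BeadReach n μ A C ∧ ∀ k, k ≤ n → C k = B k := by
  intro n
  induction n with
  | zero =>
    intro μ B hB _ A hA _
    refine ⟨A, Relation.ReflTransGen.refl, ?_⟩
    intro k hk
    have : k = 0 := by omega
    rw [this, hA.1, hB.1]
  | succ n ih =>
    intro μ B hB hgap A hA hAB
    obtain ⟨D, hreD, hDmono, hDB, hD1⟩ :=
      lemA hB hA hAB (by omega) hgap
    rcases Nat.eq_zero_or_pos n with rfl | hn
    · -- n + 1 = 1
      refine ⟨D, hreD, ?_⟩
      intro k hk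
      interval_cases k
      · rw [hDmono.1, hB.1]
      · exact hD1
    · -- apply IH with base B 1 to beads 2..n+1
      have hB' : BeadMono n (B 1) (fun k => B (k+1)) := by
        refine ⟨rfl, ?_, ?_, ?_⟩
        · show B 1 ≤ B 2
          have := hB.2.2.1 2 le_rfl (by omega)
          norm_num at this; linarith
        · intro k h2 hkn
          show B (k-1+1) < B (k+1)
          have := hB.2.2.1 (k+1) (by omega) (by omega)
          have e : k - 1 + 1 = k := by omega
          rw [e]
          simpa using this
        · intro k h2 hkn
          show B (k-1+1) - B (k-2+1) ≤ B (k+1) - B (k-1+1)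
          have := hB.2.2.2 (k+1) (by omega) (by omega)
          have e1 : k - 1 + 1 = k := by omega
          have e2 : k - 2 + 1 = k - 1 := by omega
          have e3 : k + 1 - 2 = k - 1 := by omega
          rw [e1, e2]
          simp only [Nat.add_sub_cancel] at this
          rw [e3] at this
          exact this
      have hgap' : ∀ k, 3 ≤ k → k ≤ n →
          (fun k => B (k+1)) (k-2) - (fun k => B (k+1)) (k-3) <
          (fun k => B (k+1)) k - (fun k => B (k+1)) (k-1) := by
        intro k h3 hkn
        have := hgap (k+1) (by omega) (by omega)
        have e1 : k + 1 - 2 = k - 1 := by omega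
        have e2 : k + 1 - 3 = k - 2 := by omega
        have e3 : k + 1 - 1 = k := by omega
        rw [e1, e2, e3] at this
        show B (k-2+1) - B (k-3+1) < B (k+1) - B (k-1+1)
        have f1 : k - 2 + 1 = k - 1 := by omega
        have f2 : k - 3 + 1 = k - 2 := by omega
        have f3 : k - 1 + 1 = k := by omega
        rw [f1, f2, f3]
        exact this
      have hD' : BeadMono n (B 1) (fun k => D (k+1)) := by
        refine ⟨hD1, ?_, ?_, ?_⟩
        · show D 1 ≤ D 2
          have := hDmono.2.2.1 2 le_rfl (by omega)
          norm_num at this; linarith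
        · intro k h2 hkn
          show D (k-1+1) < D (k+1)
          have := hDmono.2.2.1 (k+1) (by omega) (by omega)
          have e : k - 1 + 1 = k := by omega
          rw [e]
          simpa using this
        · intro k h2 hkn
          show D (k-1+1) - D (k-2+1) ≤ D (k+1) - D (k-1+1)
          have := hDmono.2.2.2 (k+1) (by omega) (by omega)
          have e1 : k - 1 + 1 = k := by omega
          have e2 : k - 2 + 1 = k - 1 := by omega
          have e3 : k + 1 - 2 = k - 1 := by omega
          rw [e1, e2]
          simp only [Nat.add_sub_cancel] at this
          rw [e3] at this
          exact this
      have hDB' : ∀ k, 1 ≤ k → k ≤ n → (fun k => D (k+1)) k ≤ (fun k => B (k+1)) k :=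
        fun k h1 h2 => hDB (k+1) (by omega) (by omega)
      obtain ⟨C', hreC', hC'⟩ := ih (B 1) (fun k => B (k+1)) hB' hgap'
        (fun k => D (k+1)) hD' hDB'
      refine ⟨fun k => if k = 0 then μ else C' (k-1),
        Relation.ReflTransGen.trans hreD
          (unshift_reach hB hDmono hD1 C' hreC'), ?_⟩
      intro k hk
      rcases Nat.eq_zero_or_pos k with rfl | hkpos
      · show (if (0:ℕ) = 0 then μ else C' (0-1)) = B 0
        rw [if_pos rfl, hB.1]
      · show (if k = 0 then μ else C' (k-1)) = B k
        rw [if_neg (by omega)]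
        have := hC' (k-1) (by omega)
        rw [this]
        congr 1
        omega

end BeadProof

/-- if the gaps of `B` satisfy `b k > b (k - 2)` for `3 ≤ k ≤ n`,
then every monotone `A ≤ B` can be slid to `B`. -/
theorem slide_of_gap_condition (n : ℕ) (μ : ℝ) (B : ℕ → ℝ)
    (hB : BeadMono n μ B)
    (hgap : ∀ k, 3 ≤ k → k ≤ n → B (k - 2) - B (k - 3) < B k - B (k - 1)) :
    ∀ A : ℕ → ℝ, BeadMono n μ A → (∀ k, 1 ≤ k → k ≤ n → A k ≤ B k) →
      ∃ C : ℕ → ℝ, BeadReach n μ A C ∧ ∀ k, k ≤ n → C k = B k := by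
  exact fun A hA hAB => BeadProof.mainAux n μ B hB hgap A hA hAB
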